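/- Let S ⊆ {1,...,n} be a nonempty subset of size s ≥ 1 and set ρ = λ/(λ + max{1, s/d}·max_{i∈{1,...,n}} ‖a_i‖₂²). Then: if 1 ≤ s ≤ d−1, min_{i∈S} f(S∖{i}) ≤ (1 + 1/(sρ + d − s))·f(S); and if d ≤ s ≤ n, min_{i∈S} f(S∖{i}) ≤ (1 + 1/(dρ + s − d))·f(S). -/

import Mathlib

open Matrix Finset

noncomputable section


/-- The information matrix `∑_{i ∈ S} a_i a_iᵀ + λ I_d`. -/
def infoM (d n : ℕ) (a : Fin n → Fin d → ℝ) (lam : ℝ) (S : Finset (Fin n)) :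
    Matrix (Fin d) (Fin d) ℝ :=
  (∑ i ∈ S, Matrix.vecMulVec (a i) (a i)) + lam • (1 : Matrix (Fin d) (Fin d) ℝ)

/-- `f(S) = tr((∑_{i∈S} a_i a_iᵀ + λ I_d)⁻¹)`. -/
def fS (d n : ℕ) (a : Fin n → Fin d → ℝ) (lam : ℝ) (S : Finset (Fin n)) : ℝ :=
  Matrix.trace (infoM d n a lam S)⁻¹

/-- `z_k = min_{|S| = k} f(S)`. -/
def zk (d n : ℕ) (a : Fin n → Fin d → ℝ) (lam : ℝ) (k : ℕ) : ℝ :=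
  sInf {r : ℝ | ∃ S : Finset (Fin n), S.card = k ∧ fS d n a lam S = r}

end


set_option maxHeartbeats 1000000

section Aux
variable {d : ℕ}

lemma vmv_mulVec (u v x : Fin d → ℝ) : Matrix.vecMulVec u v *ᵥ x = (v ⬝ᵥ x) • u := by
  funext j
  simp only [Matrix.mulVec, Matrix.vecMulVec_apply, dotProduct, Pi.smul_apply, smul_eq_mul,
    Finset.sum_mul]
  exact Finset.sum_congr rfl fun k _ => by ring

lemma mul_vmv (N : Matrix (Fin d) (Fin d) ℝ) (u w : Fin d → ℝ) :
    N * Matrix.vecMulVec u w = Matrix.vecMulVec (N *ᵥ u) w := by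
  ext j l
  simp only [Matrix.mul_apply, Matrix.vecMulVec_apply, Matrix.mulVec, dotProduct, Finset.sum_mul]
  exact Finset.sum_congr rfl fun k _ => by ring

lemma vmv_mul (N : Matrix (Fin d) (Fin d) ℝ) (u w : Fin d → ℝ) :
    Matrix.vecMulVec u w * N = Matrix.vecMulVec u (Nᵀ *ᵥ w) := by
  ext j l
  simp only [Matrix.mul_apply, Matrix.vecMulVec_apply, Matrix.mulVec, Matrix.transpose_apply,
    dotProduct, Finset.mul_sum]
  exact Finset.sum_congr rfl fun k _ => by ring

lemma trace_vmv (u w : Fin d → ℝ) : Matrix.trace (Matrix.vecMulVec u w) = u ⬝ᵥ w := by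
  simp [Matrix.trace, Matrix.vecMulVec_apply, dotProduct, Matrix.diag]

lemma smul_vmv (c : ℝ) (u w : Fin d → ℝ) :
    Matrix.vecMulVec u (c • w) = c • Matrix.vecMulVec u w := by
  ext j l
  simp [Matrix.vecMulVec_apply]
  ring

lemma vmv_psd (u : Fin d → ℝ) : (Matrix.vecMulVec u u).PosSemidef := by
  simpa using Matrix.posSemidef_vecMulVec_self_star u

lemma psd_sum {n : ℕ} (S : Finset (Fin n)) (f : Fin n → Matrix (Fin d) (Fin d) ℝ)
    (h : ∀ i ∈ S, (f i).PosSemidef) : (∑ i ∈ S, f i).PosSemidef := by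
  classical
  induction S using Finset.induction_on with
  | empty => simpa using Matrix.PosSemidef.zero
  | insert _ _ hni ih =>
    rename_i i s
    rw [Finset.sum_insert hni]
    exact Matrix.PosSemidef.add (h i (Finset.mem_insert_self i s))
      (ih fun j hj => h j (Finset.mem_insert_of_mem hj))

lemma pd_smul_one (lam : ℝ) (h : 0 < lam) :
    (lam • (1 : Matrix (Fin d) (Fin d) ℝ)).PosDef := by
  have : lam • (1 : Matrix (Fin d) (Fin d) ℝ) = Matrix.diagonal (fun _ => lam) := by
    ext j k
    by_cases hjk : j = k <;> simp [Matrix.one_apply, Matrix.diagonal_apply, hjk]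
  rw [this]
  exact Matrix.PosDef.diagonal fun _ => h

lemma conj_trace (U : Matrix.unitaryGroup (Fin d) ℝ) (f : Fin d → ℝ) :
    Matrix.trace ((U : Matrix (Fin d) (Fin d) ℝ) * Matrix.diagonal f *
      star (U : Matrix (Fin d) (Fin d) ℝ)) = ∑ j, f j := by
  rw [Matrix.trace_mul_cycle, (Matrix.mem_unitaryGroup_iff').mp U.2, Matrix.one_mul,
    Matrix.trace_diagonal]

variable {M : Matrix (Fin d) (Fin d) ℝ}

lemma inv_spectral (hM : M.PosDef) :
    M⁻¹ = (Matrix.IsHermitian.eigenvectorUnitary hM.isHermitian : Matrix (Fin d) (Fin d) ℝ) *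
      Matrix.diagonal (fun j => (hM.isHermitian.eigenvalues j)⁻¹) *
      star (Matrix.IsHermitian.eigenvectorUnitary hM.isHermitian : Matrix (Fin d) (Fin d) ℝ) := by
  apply Matrix.inv_eq_right_inv
  set U := (Matrix.IsHermitian.eigenvectorUnitary hM.isHermitian : Matrix (Fin d) (Fin d) ℝ) with hU
  have hUU : U * star U = 1 := (Matrix.mem_unitaryGroup_iff).mp (Matrix.IsHermitian.eigenvectorUnitary hM.isHermitian).2
  have hUU' : star U * U = 1 := (Matrix.mem_unitaryGroup_iff').mp (Matrix.IsHermitian.eigenvectorUnitary hM.isHermitian).2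
  have hMU : M * U = U * Matrix.diagonal (RCLike.ofReal ∘ hM.isHermitian.eigenvalues) := by
    have h : star U * M * U = Matrix.diagonal (RCLike.ofReal ∘ hM.isHermitian.eigenvalues) := by
      simpa only [Unitary.conjStarAlgAut_star_apply, Unitary.coe_star] using
        hM.isHermitian.conjStarAlgAut_star_eigenvectorUnitary
    calc M * U = (U * star U) * M * U := by rw [hUU, Matrix.one_mul]
    _ = U * (star U * M * U) := by simp only [Matrix.mul_assoc]
    _ = U * Matrix.diagonal (RCLike.ofReal ∘ hM.isHermitian.eigenvalues) := by rw [h]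
  have hdd : Matrix.diagonal (RCLike.ofReal ∘ hM.isHermitian.eigenvalues) *
      Matrix.diagonal (fun j => (hM.isHermitian.eigenvalues j)⁻¹) = (1 : Matrix (Fin d) (Fin d) ℝ) := by
    rw [Matrix.diagonal_mul_diagonal, ← Matrix.diagonal_one]
    exact congrArg Matrix.diagonal (funext fun j => by
      simp only [Function.comp_apply, RCLike.ofReal_real_eq_id, id_eq]
      exact mul_inv_cancel₀ (hM.eigenvalues_pos j).ne')
  calc M * (U * Matrix.diagonal (fun j => (hM.isHermitian.eigenvalues j)⁻¹) * star U)
      = (M * U) * Matrix.diagonal (fun j => (hM.isHermitian.eigenvalues j)⁻¹) * star U := by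
        simp only [Matrix.mul_assoc]
    _ = U * (Matrix.diagonal (RCLike.ofReal ∘ hM.isHermitian.eigenvalues) *
        Matrix.diagonal (fun j => (hM.isHermitian.eigenvalues j)⁻¹)) * star U := by
        rw [hMU]; simp only [Matrix.mul_assoc]
    _ = 1 := by rw [hdd, Matrix.mul_one, hUU]

lemma trace_inv_eq (hM : M.PosDef) :
    Matrix.trace M⁻¹ = ∑ j, (hM.isHermitian.eigenvalues j)⁻¹ := by
  rw [inv_spectral hM]
  exact conj_trace _ _

lemma trace_inv_sq_eq (hM : M.PosDef) :
    Matrix.trace (M⁻¹ * M⁻¹) = ∑ j, ((hM.isHermitian.eigenvalues j)⁻¹)^2 := by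
  set U := (Matrix.IsHermitian.eigenvectorUnitary hM.isHermitian : Matrix (Fin d) (Fin d) ℝ) with hU
  have hUU' : star U * U = 1 := (Matrix.mem_unitaryGroup_iff').mp (Matrix.IsHermitian.eigenvectorUnitary hM.isHermitian).2
  have h : M⁻¹ * M⁻¹ = U * Matrix.diagonal (fun j => ((hM.isHermitian.eigenvalues j)⁻¹)^2) * star U := by
    rw [inv_spectral hM]
    calc (U * Matrix.diagonal (fun j => (hM.isHermitian.eigenvalues j)⁻¹) * star U) *
        (U * Matrix.diagonal (fun j => (hM.isHermitian.eigenvalues j)⁻¹) * star U)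
        = U * Matrix.diagonal (fun j => (hM.isHermitian.eigenvalues j)⁻¹) * (star U * U) *
          Matrix.diagonal (fun j => (hM.isHermitian.eigenvalues j)⁻¹) * star U := by
          simp only [Matrix.mul_assoc]
      _ = U * (Matrix.diagonal (fun j => (hM.isHermitian.eigenvalues j)⁻¹) *
          Matrix.diagonal (fun j => (hM.isHermitian.eigenvalues j)⁻¹)) * star U := by
          rw [hUU', Matrix.mul_one]; simp only [Matrix.mul_assoc]
      _ = U * Matrix.diagonal (fun j => ((hM.isHermitian.eigenvalues j)⁻¹)^2) * star U := by
          rw [Matrix.diagonal_mul_diagonal]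
          congr 1
          exact congrArg (U * ·) <| congrArg Matrix.diagonal
            (funext fun j => (sq ((hM.isHermitian.eigenvalues j)⁻¹)).symm)
  rw [h]
  exact conj_trace _ _

lemma trace_eq_sum_eig (hM : M.PosDef) :
    Matrix.trace M = ∑ j, hM.isHermitian.eigenvalues j := by
  conv_lhs => rw [hM.isHermitian.spectral_theorem]
  rw [show Matrix.diagonal (RCLike.ofReal ∘ hM.isHermitian.eigenvalues) =
    Matrix.diagonal (fun j => hM.isHermitian.eigenvalues j) by simp]
  exact conj_trace _ _

lemma eig_ge {A : Matrix (Fin d) (Fin d) ℝ} {lam : ℝ} (hA : A.PosSemidef)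
    (hM : (A + lam • (1 : Matrix (Fin d) (Fin d) ℝ)).PosDef) (j : Fin d) :
    lam ≤ hM.isHermitian.eigenvalues j := by
  set M := A + lam • (1 : Matrix (Fin d) (Fin d) ℝ)
  set v : Fin d → ℝ := ⇑(hM.isHermitian.eigenvectorBasis j) with hv
  have hveq : M *ᵥ v = hM.isHermitian.eigenvalues j • v :=
    hM.isHermitian.mulVec_eigenvectorBasis j
  have hvne : v ≠ 0 := by
    have := hM.isHermitian.eigenvectorBasis.orthonormal.ne_zero j
    intro h
    apply this
    ext k
    exact congrFun h k
  have hAv : A *ᵥ v = (hM.isHermitian.eigenvalues j - lam) • v := by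
    have : M *ᵥ v = A *ᵥ v + lam • v := by
      simp [M, Matrix.add_mulVec, Matrix.smul_mulVec]
    rw [this] at hveq
    have h2 : A *ᵥ v = hM.isHermitian.eigenvalues j • v - lam • v := by
      rw [← hveq]; abel
    rw [h2, sub_smul]
  have h0 : 0 ≤ v ⬝ᵥ (A *ᵥ v) := by simpa using hA.dotProduct_mulVec_nonneg v
  rw [hAv] at h0
  have hvv : 0 < v ⬝ᵥ v := by
    rw [show v ⬝ᵥ v = dotProduct (star v) v by simp]
    exact dotProduct_star_self_pos_iff.mpr hvne
  rw [dotProduct_smul, smul_eq_mul] at h0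
  nlinarith [h0, hvv]

lemma rank_sum_le {n : ℕ} (a : Fin n → Fin d → ℝ) (S : Finset (Fin n)) :
    LinearMap.rank (∑ i ∈ S, Matrix.vecMulVec (a i) (a i)).mulVecLin ≤ (S.card : Cardinal) := by
  have h1 : (∑ i ∈ S, Matrix.vecMulVec (a i) (a i)).mulVecLin
      = ∑ i ∈ S, (Matrix.vecMulVec (a i) (a i)).mulVecLin := by
    classical
    induction S using Finset.induction_on with
    | empty => simp
    | insert _ _ hni ih => rename_i i s; rw [Finset.sum_insert hni, Finset.sum_insert hni,
        Matrix.mulVecLin_add, ih]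
  rw [h1]
  refine (LinearMap.rank_finset_sum_le _ _).trans ?_
  have h2 : ∀ i : Fin n, LinearMap.rank (Matrix.vecMulVec (a i) (a i)).mulVecLin ≤ 1 := by
    intro i
    have hr : LinearMap.range (Matrix.vecMulVec (a i) (a i)).mulVecLin ≤
        Submodule.span ℝ {a i} := by
      rintro x ⟨y, rfl⟩
      rw [Matrix.mulVecLin_apply, vmv_mulVec]
      exact Submodule.smul_mem _ _ (Submodule.mem_span_singleton_self _)
    refine (Submodule.rank_mono hr).trans ?_
    refine (rank_span_le _).trans ?_
    simp
  calc (∑ i ∈ S, LinearMap.rank (Matrix.vecMulVec (a i) (a i)).mulVecLin)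
      ≤ ∑ i ∈ S, (1 : Cardinal) := Finset.sum_le_sum fun i _ => h2 i
    _ = (S.card : Cardinal) := by simp

lemma card_eig_ne {A : Matrix (Fin d) (Fin d) ℝ} {lam : ℝ}
    (hM : (A + lam • (1 : Matrix (Fin d) (Fin d) ℝ)).PosDef) (s : ℕ)
    (hrank : LinearMap.rank A.mulVecLin ≤ (s : Cardinal)) :
    Fintype.card {j // hM.isHermitian.eigenvalues j ≠ lam} ≤ s := by
  classical
  set M := A + lam • (1 : Matrix (Fin d) (Fin d) ℝ)
  set ν := hM.isHermitian.eigenvalues with hν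
  set v : Fin d → Fin d → ℝ := fun j => ⇑(hM.isHermitian.eigenvectorBasis j) with hv
  have hveq : ∀ j, M *ᵥ v j = ν j • v j := fun j => hM.isHermitian.mulVec_eigenvectorBasis j
  have hAv : ∀ j, A *ᵥ v j = (ν j - lam) • v j := by
    intro j
    have h1 : M *ᵥ v j = A *ᵥ v j + lam • v j := by
      simp [M, Matrix.add_mulVec, Matrix.smul_mulVec]
    have h2 : A *ᵥ v j = ν j • v j - lam • v j := by
      rw [← hveq j, h1]; abel
    rw [h2, sub_smul]
  have hmem : ∀ j : {j // ν j ≠ lam}, (v j : Fin d → ℝ) ∈ LinearMap.range A.mulVecLin := by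
    rintro ⟨j, hj⟩
    refine ⟨(ν j - lam)⁻¹ • v j, ?_⟩
    rw [Matrix.mulVecLin_apply, Matrix.mulVec_smul, hAv j, smul_smul,
      inv_mul_cancel₀ (sub_ne_zero.mpr hj), one_smul]
  have hli : LinearIndependent ℝ (fun j : {j // ν j ≠ lam} => v j) := by
    have h0 : LinearIndependent ℝ v := by
      have := hM.isHermitian.eigenvectorBasis.orthonormal.linearIndependent
      exact this.map' (WithLp.linearEquiv 2 ℝ (Fin d → ℝ)).toLinearMap
        (LinearEquiv.ker _)
    exact h0.comp Subtype.val Subtype.val_injective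
  set p := LinearMap.range A.mulVecLin
  have hli2 : LinearIndependent ℝ (fun j : {j // ν j ≠ lam} => (⟨v j, hmem j⟩ : p)) := by
    apply LinearIndependent.of_comp p.subtype
    exact hli
  have hcard : (Fintype.card {j // ν j ≠ lam} : Cardinal) ≤ Module.rank ℝ p := by
    have := hli2.cardinal_le_rank
    simpa [Cardinal.mk_fintype] using this
  have : (Fintype.card {j // ν j ≠ lam} : Cardinal) ≤ (s : Cardinal) :=
    hcard.trans hrank
  exact_mod_cast this

lemma sherman (M' : Matrix (Fin d) (Fin d) ℝ) (b : Fin d → ℝ) (hM' : M'.PosDef) :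
    0 ≤ b ⬝ᵥ ((M' + Matrix.vecMulVec b b)⁻¹ *ᵥ b) ∧
    b ⬝ᵥ ((M' + Matrix.vecMulVec b b)⁻¹ *ᵥ b) < 1 ∧
    Matrix.trace M'⁻¹ = Matrix.trace (M' + Matrix.vecMulVec b b)⁻¹ +
      (((M' + Matrix.vecMulVec b b)⁻¹ *ᵥ b) ⬝ᵥ ((M' + Matrix.vecMulVec b b)⁻¹ *ᵥ b)) /
      (1 - b ⬝ᵥ ((M' + Matrix.vecMulVec b b)⁻¹ *ᵥ b)) := by
  classical
  have hbb : (Matrix.vecMulVec b b).PosSemidef := vmv_psd b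
  have hM : (M' + Matrix.vecMulVec b b).PosDef := hM'.add_posSemidef hbb
  set M := M' + Matrix.vecMulVec b b with hMdef
  set x := M⁻¹ *ᵥ b with hx
  set t := b ⬝ᵥ x with ht
  have hMinv : M * M⁻¹ = 1 := Matrix.mul_nonsing_inv _ (Matrix.isUnit_iff_isUnit_det _ |>.mp hM.isUnit)
  have hMx : M *ᵥ x = b := by
    rw [hx, Matrix.mulVec_mulVec, hMinv, Matrix.one_mulVec]
  have hxMx : x ⬝ᵥ (M *ᵥ x) = t := by rw [hMx, dotProduct_comm]
  have hsplit : x ⬝ᵥ (M *ᵥ x) = x ⬝ᵥ (M' *ᵥ x) + t * t := by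
    rw [hMdef, Matrix.add_mulVec, dotProduct_add, vmv_mulVec, dotProduct_smul, smul_eq_mul,
      dotProduct_comm x b, ← ht]
  have hxM'x : 0 ≤ x ⬝ᵥ (M' *ᵥ x) := by simpa using hM'.posSemidef.dotProduct_mulVec_nonneg x
  have ht0 : 0 ≤ t := by
    have := hM.posSemidef.dotProduct_mulVec_nonneg x
    simp only [star_trivial] at this
    rw [hxMx] at this; exact this
  have htt : t - t * t = x ⬝ᵥ (M' *ᵥ x) := by
    have h := hsplit
    rw [hxMx] at h
    linarith
  have ht1 : t < 1 := by
    rcases eq_or_ne x 0 with hx0 | hx0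
    · have : t = 0 := by rw [ht, hx0, dotProduct_zero]
      rw [this]; norm_num
    · have hpos : 0 < x ⬝ᵥ (M' *ᵥ x) := by simpa using hM'.dotProduct_mulVec_pos hx0
      by_contra h
      push_neg at h
      nlinarith [mul_nonneg ht0 (sub_nonneg.mpr h)]
  have hc : 0 < 1 - t := by linarith
  refine ⟨ht0, ht1, ?_⟩
  have hMinvT : M⁻¹ᵀ = M⁻¹ := by
    have h := (hM.inv).isHermitian.eq
    rwa [Matrix.conjTranspose_eq_transpose_of_trivial] at h
  have hSM : M'⁻¹ = M⁻¹ + (1 - t)⁻¹ • Matrix.vecMulVec x x := by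
    apply Matrix.inv_eq_right_inv
    have hMM' : M' = M - Matrix.vecMulVec b b := (add_sub_cancel_right M' (Matrix.vecMulVec b b)).symm
    rw [hMM']
    rw [Matrix.sub_mul, Matrix.mul_add, Matrix.mul_add]
    rw [hMinv]
    rw [Matrix.mul_smul, mul_vmv, hMx]
    have h1 : Matrix.vecMulVec b b * M⁻¹ = Matrix.vecMulVec b x := by
      rw [vmv_mul, hMinvT, ← hx]
    have h2 : Matrix.vecMulVec b b * ((1 - t)⁻¹ • Matrix.vecMulVec x x) =
        ((1 - t)⁻¹ * t) • Matrix.vecMulVec b x := by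
      rw [Matrix.mul_smul, vmv_mul]
      have : (Matrix.vecMulVec x x)ᵀ *ᵥ b = t • x := by
        have hsymm : (Matrix.vecMulVec x x)ᵀ = Matrix.vecMulVec x x := by
          ext j k; simp [Matrix.vecMulVec_apply, mul_comm]
        rw [hsymm, vmv_mulVec, dotProduct_comm x b, ← ht]
      rw [this, smul_vmv, smul_smul]
    rw [h1, h2]
    have hcoef : (1 - t)⁻¹ = 1 + (1 - t)⁻¹ * t := by field_simp; ring
    have hsmul : (1 - t)⁻¹ • Matrix.vecMulVec b x =
        Matrix.vecMulVec b x + ((1 - t)⁻¹ * t) • Matrix.vecMulVec b x := by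
      calc (1 - t)⁻¹ • Matrix.vecMulVec b x
          = ((1:ℝ) + (1 - t)⁻¹ * t) • Matrix.vecMulVec b x := by rw [← hcoef]
        _ = Matrix.vecMulVec b x + ((1 - t)⁻¹ * t) • Matrix.vecMulVec b x := by
            rw [add_smul, one_smul]
    rw [hsmul]
    abel
  rw [hSM, Matrix.trace_add, Matrix.trace_smul, trace_vmv, smul_eq_mul, div_eq_inv_mul]

lemma am_hm {ι : Type*} (J : Finset ι) (ν : ι → ℝ) (h : ∀ j ∈ J, 0 < ν j) :
    (J.card : ℝ)^2 ≤ (∑ j ∈ J, ν j) * (∑ j ∈ J, (ν j)⁻¹) := by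
  have hCS := Finset.sum_mul_sq_le_sq_mul_sq J (fun j => Real.sqrt (ν j))
    (fun j => (Real.sqrt (ν j))⁻¹)
  have h2 : (∑ j ∈ J, Real.sqrt (ν j) * (Real.sqrt (ν j))⁻¹) = (J.card : ℝ) := by
    rw [Finset.sum_congr rfl (fun j hj =>
      mul_inv_cancel₀ (ne_of_gt (Real.sqrt_pos.mpr (h j hj))))]
    simp
  rw [h2] at hCS
  have h3 : (∑ j ∈ J, Real.sqrt (ν j) ^ 2) = ∑ j ∈ J, ν j :=
    Finset.sum_congr rfl fun j hj => Real.sq_sqrt (h j hj).le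
  have h4 : (∑ j ∈ J, (Real.sqrt (ν j))⁻¹ ^ 2) = ∑ j ∈ J, (ν j)⁻¹ :=
    Finset.sum_congr rfl fun j hj => by rw [inv_pow, Real.sq_sqrt (h j hj).le]
  rw [h3, h4] at hCS
  exact hCS

lemma psd_trace_nonneg {P : Matrix (Fin d) (Fin d) ℝ} (hP : P.PosSemidef) :
    0 ≤ Matrix.trace P := by
  rw [Matrix.trace]
  apply Finset.sum_nonneg
  intro j _
  have := hP.dotProduct_mulVec_nonneg (Pi.single j 1)
  simpa [Matrix.mulVec_single, dotProduct, Pi.single_apply] using this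

lemma trace_mul_vmv (N : Matrix (Fin d) (Fin d) ℝ) (u w : Fin d → ℝ) :
    Matrix.trace (N * Matrix.vecMulVec u w) = w ⬝ᵥ (N *ᵥ u) := by
  simp only [Matrix.trace, Matrix.diag, Matrix.mul_apply, Matrix.vecMulVec_apply, dotProduct,
    Matrix.mulVec, Finset.mul_sum]
  refine Finset.sum_congr rfl fun j _ => Finset.sum_congr rfl fun k _ => by ring

lemma key2 (dd s lam rho T Q : ℝ) (hds : dd ≤ s) (hlam : 0 < lam)
    (hrho0 : 0 ≤ rho) (hdrho : dd * rho ≤ lam * T) (hCS : T^2 ≤ dd * Q)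
    (hQT : lam * Q ≤ T) (hQ0 : 0 ≤ Q) (hT0 : 0 ≤ T) :
    (dd * rho + s - dd) * (T - lam * Q) ≤ T * (s - dd + lam * T) := by
  nlinarith [mul_nonneg (sub_nonneg.mpr hdrho) hT0,
    mul_nonneg hrho0 (sub_nonneg.mpr (by nlinarith : lam * T^2 ≤ dd * (lam * Q))),
    mul_nonneg (sub_nonneg.mpr hds) (mul_nonneg hlam.le hQ0),
    mul_nonneg hrho0 (mul_nonneg hlam.le (mul_nonneg hT0 hT0)),
    mul_nonneg (sub_nonneg.mpr hds) (sub_nonneg.mpr hQT)]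

lemma key1 (dd s lam rho T' Q' : ℝ) (hsd : s ≤ dd) (hlam : 0 < lam)
    (hrho0 : 0 ≤ rho) (hsrho : s * rho ≤ lam * T') (hT0 : 0 ≤ T') (hQ0 : 0 ≤ Q')
    (hQT : lam * Q' ≤ T') :
    (s * rho + dd - s) * ((T' + (dd - s) * lam⁻¹) - lam * (Q' + (dd - s) * lam⁻¹^2)) ≤
      (T' + (dd - s) * lam⁻¹) * (s - dd + lam * (T' + (dd - s) * lam⁻¹)) := by
  have h1 : lam * lam⁻¹ = 1 := mul_inv_cancel₀ hlam.ne'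
  have hL : (T' + (dd - s) * lam⁻¹) - lam * (Q' + (dd - s) * lam⁻¹^2) = T' - lam * Q' := by
    field_simp
    ring
  have hR : s - dd + lam * (T' + (dd - s) * lam⁻¹) = lam * T' := by
    field_simp
    ring
  rw [hL, hR]
  have hexp : (T' + (dd - s) * lam⁻¹) * (lam * T') = lam * T'^2 + (dd - s) * T' := by
    field_simp
  rw [hexp]
  nlinarith [mul_nonneg (sub_nonneg.mpr hsrho) hT0,
    mul_nonneg (mul_nonneg (sub_nonneg.mpr hsd) hlam.le) hQ0,
    mul_nonneg (sub_nonneg.mpr hsd) (sub_nonneg.mpr hQT),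
    mul_nonneg (mul_nonneg hT0 hlam.le) hQ0]

end Aux

theorem stmt3 (d n : ℕ) (hd : 1 ≤ d) (hdn : d ≤ n)
    (a : Fin n → Fin d → ℝ) (lam : ℝ) (hlam : 0 < lam)
    (S : Finset (Fin n)) (hS : S.Nonempty)
    (rho : ℝ)
    (hrho : rho = lam / (lam + max 1 ((S.card : ℝ) / (d : ℝ)) *
      (⨆ i : Fin n, ∑ j, (a i j) ^ 2))) :
    (S.card < d →
      sInf {r : ℝ | ∃ i ∈ S, fS d n a lam (S.erase i) = r} ≤
        (1 + 1 / ((S.card : ℝ) * rho + (d : ℝ) - S.card)) * fS d n a lam S) ∧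
    (d ≤ S.card →
      sInf {r : ℝ | ∃ i ∈ S, fS d n a lam (S.erase i) = r} ≤
        (1 + 1 / ((d : ℝ) * rho + (S.card : ℝ) - d)) * fS d n a lam S) := by
  classical
  have hd0 : (0:ℝ) < (d:ℝ) := by exact_mod_cast hd
  have hs1 : 1 ≤ S.card := Finset.card_pos.mpr hS
  have hs1R : (1:ℝ) ≤ (S.card:ℝ) := by exact_mod_cast hs1
  set B := (⨆ i : Fin n, ∑ j, (a i j)^2) with hBdef
  have hBi : ∀ i : Fin n, (∑ j, (a i j)^2) ≤ B := by
    intro i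
    rw [hBdef]
    exact le_ciSup (Set.Finite.bddAbove
      (Set.finite_range (fun i : Fin n => ∑ j, (a i j)^2))) i
  obtain ⟨i0, hi0S⟩ := hS
  have hB0 : 0 ≤ B := le_trans (Finset.sum_nonneg fun j _ => sq_nonneg _) (hBi i0)
  set A := ∑ i ∈ S, Matrix.vecMulVec (a i) (a i) with hAdef
  have hApsd : A.PosSemidef := psd_sum S _ (fun i _ => vmv_psd (a i))
  have hMpd : (A + lam • (1 : Matrix (Fin d) (Fin d) ℝ)).PosDef :=
    Matrix.PosDef.posSemidef_add hApsd (pd_smul_one lam hlam)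
  have hMunit : IsUnit (A + lam • (1 : Matrix (Fin d) (Fin d) ℝ)).det :=
    (Matrix.isUnit_iff_isUnit_det _).mp hMpd.isUnit
  set N := (A + lam • (1 : Matrix (Fin d) (Fin d) ℝ))⁻¹ with hNdef
  have hNM : N * (A + lam • (1 : Matrix (Fin d) (Fin d) ℝ)) = 1 :=
    Matrix.nonsing_inv_mul _ hMunit
  have hNT : Nᵀ = N := by
    have h := (hMpd.inv).isHermitian.eq
    rw [Matrix.conjTranspose_eq_transpose_of_trivial] at h
    exact h
  set ν := hMpd.isHermitian.eigenvalues with hνdef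
  have hνlam : ∀ j, lam ≤ ν j := fun j => eig_ge hApsd hMpd j
  have hνpos : ∀ j, 0 < ν j := fun j => lt_of_lt_of_le hlam (hνlam j)
  set T := ∑ j, (ν j)⁻¹ with hTdef
  set Q := ∑ j, ((ν j)⁻¹)^2 with hQdef
  have hT0 : 0 ≤ T := Finset.sum_nonneg fun j _ => (inv_nonneg.mpr (hνpos j).le)
  have hQ0 : 0 ≤ Q := Finset.sum_nonneg fun j _ => sq_nonneg _
  have hTr : Matrix.trace N = T := trace_inv_eq hMpd
  have hQr : Matrix.trace (N * N) = Q := trace_inv_sq_eq hMpd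
  have hIM : infoM d n a lam S = A + lam • (1 : Matrix (Fin d) (Fin d) ℝ) := rfl
  have hfSS : fS d n a lam S = T := by
    show Matrix.trace (infoM d n a lam S)⁻¹ = T
    rw [hIM, ← hNdef, hTr]
  have hQle : lam * Q ≤ T := by
    rw [hTdef, hQdef, Finset.mul_sum]
    refine Finset.sum_le_sum fun j _ => ?_
    have hj := hνpos j
    rw [sq]
    calc lam * ((ν j)⁻¹ * (ν j)⁻¹) ≤ ν j * ((ν j)⁻¹ * (ν j)⁻¹) := by
          apply mul_le_mul_of_nonneg_right (hνlam j)
          positivity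
      _ = (ν j)⁻¹ := by field_simp
  have htrace : ∑ j, ν j = lam * d + ∑ i ∈ S, (∑ j, (a i j)^2) := by
    rw [← trace_eq_sum_eig hMpd, Matrix.trace_add, Matrix.trace_smul, Matrix.trace_one,
      hAdef, Matrix.trace_sum]
    have h1 : ∀ i : Fin n, Matrix.trace (Matrix.vecMulVec (a i) (a i)) = ∑ j, (a i j)^2 := by
      intro i
      rw [trace_vmv]
      exact Finset.sum_congr rfl fun j _ => (sq (a i j)).symm
    rw [Finset.sum_congr rfl (fun i _ => h1 i)]
    rw [smul_eq_mul, Fintype.card_fin]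
    ring
  have hnormsum : ∑ i ∈ S, (∑ j, (a i j)^2) ≤ (S.card : ℝ) * B := by
    calc ∑ i ∈ S, (∑ j, (a i j)^2) ≤ ∑ _i ∈ S, B := Finset.sum_le_sum fun i _ => hBi i
      _ = (S.card : ℝ) * B := by rw [Finset.sum_const, nsmul_eq_mul]
  have htrace_le : ∑ j, ν j ≤ lam * d + (S.card : ℝ) * B := by
    rw [htrace]; linarith
  -- per-index quantities
  set t : Fin n → ℝ := fun i => (a i) ⬝ᵥ (N *ᵥ (a i)) with htdef
  set q : Fin n → ℝ := fun i => (N *ᵥ (a i)) ⬝ᵥ (N *ᵥ (a i)) with hqdef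
  have hq0 : ∀ i, 0 ≤ q i := by
    intro i
    have : q i = ∑ j, (N *ᵥ (a i)) j * (N *ᵥ (a i)) j := rfl
    rw [this]
    exact Finset.sum_nonneg fun j _ => mul_self_nonneg _
  have herasepd : ∀ i : Fin n, (infoM d n a lam (S.erase i)).PosDef := fun i =>
    Matrix.PosDef.posSemidef_add (psd_sum _ _ fun j _ => vmv_psd (a j)) (pd_smul_one lam hlam)
  have hsher : ∀ i ∈ S, 0 ≤ t i ∧ t i < 1 ∧
      fS d n a lam (S.erase i) = T + q i / (1 - t i) := by
    intro i hi
    have hsplit : infoM d n a lam (S.erase i) + Matrix.vecMulVec (a i) (a i)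
        = A + lam • (1 : Matrix (Fin d) (Fin d) ℝ) := by
      show ((∑ j ∈ S.erase i, Matrix.vecMulVec (a j) (a j)) + lam • 1)
          + Matrix.vecMulVec (a i) (a i) = A + lam • 1
      rw [hAdef, ← Finset.sum_erase_add S _ hi]
      abel
    obtain ⟨h0, h1, h2⟩ := sherman (infoM d n a lam (S.erase i)) (a i) (herasepd i)
    rw [hsplit, ← hNdef] at h0 h1 h2
    refine ⟨h0, h1, ?_⟩
    show Matrix.trace (infoM d n a lam (S.erase i))⁻¹ = T + q i / (1 - t i)
    rw [h2, hTr]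
  -- sum identities
  have hNA : N * A = 1 - lam • N := by
    have hA' : A = (A + lam • (1 : Matrix (Fin d) (Fin d) ℝ)) - lam • 1 :=
      (add_sub_cancel_right _ _).symm
    calc N * A = N * ((A + lam • (1 : Matrix (Fin d) (Fin d) ℝ)) - lam • 1) := by rw [← hA']
      _ = N * (A + lam • (1 : Matrix (Fin d) (Fin d) ℝ)) - lam • (N * 1) := by
          rw [Matrix.mul_sub, Matrix.mul_smul]
      _ = 1 - lam • N := by rw [hNM, Matrix.mul_one]
  have hsum_t : ∑ i ∈ S, t i = (d : ℝ) - lam * T := by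
    have h1 : ∀ i : Fin n, t i = Matrix.trace (N * Matrix.vecMulVec (a i) (a i)) := fun i =>
      (trace_mul_vmv N (a i) (a i)).symm
    calc ∑ i ∈ S, t i = ∑ i ∈ S, Matrix.trace (N * Matrix.vecMulVec (a i) (a i)) :=
          Finset.sum_congr rfl fun i _ => h1 i
      _ = Matrix.trace (N * A) := by rw [hAdef, Matrix.mul_sum, Matrix.trace_sum]
      _ = (d : ℝ) - lam * T := by
          rw [hNA, Matrix.trace_sub, Matrix.trace_smul, Matrix.trace_one, hTr, smul_eq_mul,
            Fintype.card_fin]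
  have hNNA : (N * N) * A = N - lam • (N * N) := by
    have hA' : A = (A + lam • (1 : Matrix (Fin d) (Fin d) ℝ)) - lam • 1 :=
      (add_sub_cancel_right _ _).symm
    calc (N * N) * A = (N * N) * ((A + lam • (1 : Matrix (Fin d) (Fin d) ℝ)) - lam • 1) := by
          rw [← hA']
      _ = N * (N * (A + lam • (1 : Matrix (Fin d) (Fin d) ℝ))) - lam • ((N * N) * 1) := by
          rw [Matrix.mul_sub, Matrix.mul_smul, Matrix.mul_assoc]
      _ = N - lam • (N * N) := by rw [hNM, Matrix.mul_one, Matrix.mul_one]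
  have hq_tr : ∀ i : Fin n, q i = Matrix.trace ((N * N) * Matrix.vecMulVec (a i) (a i)) := by
    intro i
    rw [trace_mul_vmv]
    show (N *ᵥ (a i)) ⬝ᵥ (N *ᵥ (a i)) = a i ⬝ᵥ ((N * N) *ᵥ a i)
    rw [Matrix.dotProduct_mulVec, ← Matrix.mulVec_transpose, hNT, Matrix.mulVec_mulVec,
      dotProduct_comm]
  have hsum_q : ∑ i ∈ S, q i = T - lam * Q := by
    calc ∑ i ∈ S, q i = ∑ i ∈ S, Matrix.trace ((N * N) * Matrix.vecMulVec (a i) (a i)) :=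
          Finset.sum_congr rfl fun i _ => hq_tr i
      _ = Matrix.trace ((N * N) * A) := by rw [hAdef, Matrix.mul_sum, Matrix.trace_sum]
      _ = T - lam * Q := by
          rw [hNNA, Matrix.trace_sub, Matrix.trace_smul, hTr, hQr, smul_eq_mul]
  set D := ∑ i ∈ S, (1 - t i) with hDdef
  have hDval : D = (S.card : ℝ) - d + lam * T := by
    rw [hDdef, Finset.sum_sub_distrib, Finset.sum_const, hsum_t, nsmul_eq_mul, mul_one]
    ring
  have hDpos : 0 < D := Finset.sum_pos (fun i hi => by linarith [(hsher i hi).2.1]) ⟨i0, hi0S⟩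
  have hX0 : 0 ≤ T - lam * Q := by
    rw [← hsum_q]; exact Finset.sum_nonneg fun i _ => hq0 i
  have hsel : ∃ i ∈ S, q i * D ≤ (T - lam * Q) * (1 - t i) := by
    by_contra hcon
    push_neg at hcon
    have hlt := Finset.sum_lt_sum_of_nonempty ⟨i0, hi0S⟩ fun i hi => hcon i hi
    rw [← Finset.mul_sum, ← hDdef, ← Finset.sum_mul, hsum_q] at hlt
    exact lt_irrefl _ hlt
  obtain ⟨i1, hi1S, hi1⟩ := hsel
  obtain ⟨ht10, ht11, hfse⟩ := hsher i1 hi1S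
  have hc1 : 0 < 1 - t i1 := by linarith
  have hinf_le : sInf {r : ℝ | ∃ i ∈ S, fS d n a lam (S.erase i) = r} ≤
      T + (T - lam * Q) / D := by
    have hmem : fS d n a lam (S.erase i1) ∈
        {r : ℝ | ∃ i ∈ S, fS d n a lam (S.erase i) = r} := ⟨i1, hi1S, rfl⟩
    have hbdd : BddBelow {r : ℝ | ∃ i ∈ S, fS d n a lam (S.erase i) = r} := by
      refine ⟨0, fun r hr => ?_⟩
      obtain ⟨i, hiS, rfl⟩ := hr
      exact psd_trace_nonneg (herasepd i).inv.posSemidef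
    refine (csInf_le hbdd hmem).trans ?_
    rw [hfse]
    have hdiv : q i1 / (1 - t i1) ≤ (T - lam * Q) / D :=
      (div_le_div_iff₀ hc1 hDpos).mpr (by linarith [hi1])
    linarith
  have final : ∀ c : ℝ, 0 < c → c * (T - lam * Q) ≤ T * ((S.card : ℝ) - d + lam * T) →
      sInf {r : ℝ | ∃ i ∈ S, fS d n a lam (S.erase i) = r} ≤ (1 + 1/c) * fS d n a lam S := by
    intro c hc hkey
    rw [hfSS]
    rw [← hDval] at hkey
    have hXD : (T - lam * Q) / D ≤ T / c := by
      rw [div_le_div_iff₀ hDpos hc]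
      linarith
    have hone : (1 + 1/c) * T = T + T/c := by ring
    rw [hone]
    linarith [hinf_le, hXD]
  have hmax1 : (1:ℝ) ≤ max 1 ((S.card:ℝ)/(d:ℝ)) := le_max_left _ _
  have hmB0 : 0 ≤ max 1 ((S.card:ℝ)/(d:ℝ)) * B := mul_nonneg (by linarith) hB0
  have hden : 0 < lam + max 1 ((S.card:ℝ)/(d:ℝ)) * B := by linarith
  have hrho0 : 0 < rho := by rw [hrho]; exact div_pos hlam hden
  constructor
  · -- case S.card < d
    intro hsd
    have hsdR : (S.card:ℝ) ≤ (d:ℝ) := by exact_mod_cast hsd.le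
    have hmax : max 1 ((S.card:ℝ)/(d:ℝ)) = 1 :=
      max_eq_left (by rw [div_le_one hd0]; exact hsdR)
    have hrho' : rho = lam / (lam + B) := by rw [hrho, hmax, one_mul]
    have hlamB : 0 < lam + B := by linarith
    have hcard : Fintype.card {j // ν j ≠ lam} ≤ S.card :=
      card_eig_ne hMpd S.card (rank_sum_le a S)
    have hFcard : (Finset.univ.filter (fun j => ν j ≠ lam)).card ≤ S.card := by
      rw [← Fintype.card_subtype]
      exact hcard
    obtain ⟨J, hFJ, _hJu, hJcard⟩ := Finset.exists_subsuperset_card_eq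
      (Finset.subset_univ (Finset.univ.filter (fun j => ν j ≠ lam))) hFcard
      (by rw [Finset.card_univ, Fintype.card_fin]; exact hsd.le)
    have hJν : ∀ j, j ∉ J → ν j = lam := by
      intro j hj
      by_contra hne
      exact hj (hFJ (Finset.mem_filter.mpr ⟨Finset.mem_univ j, hne⟩))
    set T' := ∑ j ∈ J, (ν j)⁻¹ with hT'def
    set Q' := ∑ j ∈ J, ((ν j)⁻¹)^2 with hQ'def
    have hcomplT : ∑ j ∈ Jᶜ, (ν j)⁻¹ = ((d:ℝ) - S.card) * lam⁻¹ := by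
      rw [Finset.sum_congr rfl (fun j hj => by rw [hJν j (Finset.mem_compl.mp hj)]),
        Finset.sum_const, Finset.card_compl, hJcard, Fintype.card_fin, nsmul_eq_mul,
        Nat.cast_sub hsd.le]
    have hcomplQ : ∑ j ∈ Jᶜ, ((ν j)⁻¹)^2 = ((d:ℝ) - S.card) * lam⁻¹^2 := by
      rw [Finset.sum_congr rfl (fun j hj => by rw [hJν j (Finset.mem_compl.mp hj)]),
        Finset.sum_const, Finset.card_compl, hJcard, Fintype.card_fin, nsmul_eq_mul,
        Nat.cast_sub hsd.le]
    have hTT' : T = T' + ((d:ℝ) - S.card) * lam⁻¹ := by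
      rw [hTdef, ← Finset.sum_add_sum_compl J, hcomplT, hT'def]
    have hQQ' : Q = Q' + ((d:ℝ) - S.card) * lam⁻¹^2 := by
      rw [hQdef, ← Finset.sum_add_sum_compl J, hcomplQ, hQ'def]
    have hT'0 : 0 ≤ T' := Finset.sum_nonneg fun j _ => inv_nonneg.mpr (hνpos j).le
    have hQ'0 : 0 ≤ Q' := Finset.sum_nonneg fun j _ => sq_nonneg _
    have hQ'T' : lam * Q' ≤ T' := by
      rw [hT'def, hQ'def, Finset.mul_sum]
      refine Finset.sum_le_sum fun j _ => ?_
      have hj := hνpos j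
      rw [sq]
      calc lam * ((ν j)⁻¹ * (ν j)⁻¹) ≤ ν j * ((ν j)⁻¹ * (ν j)⁻¹) := by
            apply mul_le_mul_of_nonneg_right (hνlam j)
            positivity
        _ = (ν j)⁻¹ := by field_simp
    have hJne : J.Nonempty := Finset.card_pos.mp (by rw [hJcard]; exact hs1)
    have hJpos : 0 < ∑ j ∈ J, ν j := Finset.sum_pos (fun j _ => hνpos j) hJne
    have hJsum : ∑ j ∈ J, ν j ≤ (S.card:ℝ) * (lam + B) := by
      have h1 : ∑ j ∈ J, ν j = ∑ j ∈ J, (ν j - lam) + (S.card:ℝ) * lam := by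
        rw [Finset.sum_sub_distrib, Finset.sum_const, hJcard, nsmul_eq_mul]
        ring
      have h2 : ∑ j ∈ J, (ν j - lam) ≤ ∑ j, (ν j - lam) :=
        Finset.sum_le_sum_of_subset_of_nonneg (Finset.subset_univ J)
          (fun j _ _ => by linarith [hνlam j])
      have h3 : ∑ j, (ν j - lam) = (∑ j, ν j) - (d:ℝ) * lam := by
        rw [Finset.sum_sub_distrib, Finset.sum_const, Finset.card_univ, Fintype.card_fin,
          nsmul_eq_mul]
      have h5 : (S.card:ℝ) * (lam + B) = (S.card:ℝ) * B + (S.card:ℝ) * lam := by ring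
      have h6 : (∑ j, ν j) - (d:ℝ)*lam ≤ (S.card:ℝ) * B := by
        have := htrace_le
        linarith
      linarith [h1, h2, h3.le, h6]
    have hAMHM := am_hm J ν (fun j _ => hνpos j)
    rw [hJcard] at hAMHM
    have hsrho : (S.card:ℝ) * rho ≤ lam * T' := by
      rw [hrho', mul_div_assoc', div_le_iff₀ hlamB]
      have hspos : (0:ℝ) < (S.card:ℝ) := by linarith
      have h7 : (S.card:ℝ) * ((S.card:ℝ) * lam) ≤ (S.card:ℝ) * (lam * T' * (lam + B)) := by
        have e1 : (S.card:ℝ) * ((S.card:ℝ) * lam) = lam * ((S.card:ℝ)^2) := by ring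
        have e2 : (S.card:ℝ) * (lam * T' * (lam + B)) =
            lam * (T' * ((S.card:ℝ) * (lam + B))) := by ring
        rw [e1, e2]
        refine mul_le_mul_of_nonneg_left ?_ hlam.le
        calc (S.card:ℝ)^2 ≤ (∑ j ∈ J, ν j) * T' := hAMHM
          _ = T' * (∑ j ∈ J, ν j) := by ring
          _ ≤ T' * ((S.card:ℝ) * (lam + B)) := mul_le_mul_of_nonneg_left hJsum hT'0
      exact le_of_mul_le_mul_left h7 hspos
    have hkey := key1 (d:ℝ) (S.card:ℝ) lam rho T' Q' hsdR hlam hrho0.le hsrho hT'0 hQ'0 hQ'T'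
    rw [← hTT', ← hQQ'] at hkey
    have hcpos : 0 < (S.card:ℝ) * rho + (d:ℝ) - S.card := by
      have : 0 < (S.card:ℝ) * rho := by positivity
      linarith
    exact final _ hcpos hkey
  · -- case d ≤ S.card
    intro hds
    have hdsR : (d:ℝ) ≤ (S.card:ℝ) := by exact_mod_cast hds
    set m := max 1 ((S.card:ℝ)/(d:ℝ)) with hm
    have hsm : (S.card:ℝ) ≤ (d:ℝ) * m := by
      have h1 : (S.card:ℝ)/(d:ℝ) ≤ m := le_max_right _ _
      rw [div_le_iff₀ hd0] at h1
      linarith [h1]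
    have hAM := am_hm Finset.univ ν (fun j _ => hνpos j)
    rw [Finset.card_univ, Fintype.card_fin] at hAM
    have hne : Nonempty (Fin d) := ⟨⟨0, hd⟩⟩
    have hP0 : 0 < ∑ j, ν j := Finset.sum_pos (fun j _ => hνpos j) Finset.univ_nonempty
    have hdrho : (d:ℝ) * rho ≤ lam * T := by
      rw [hrho, mul_div_assoc', div_le_iff₀ hden]
      have c1 : (d:ℝ)*lam*(∑ j, ν j) ≤ (d:ℝ)*lam*(lam*d + (S.card:ℝ)*B) :=
        mul_le_mul_of_nonneg_left htrace_le (by positivity)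
      have c2 : (d:ℝ)*lam*(lam*d + (S.card:ℝ)*B) ≤ (d:ℝ)*lam*(lam*d + (d:ℝ)*(m*B)) := by
        have h1 : (S.card:ℝ)*B ≤ (d:ℝ)*(m*B) := by
          calc (S.card:ℝ)*B ≤ ((d:ℝ)*m)*B := mul_le_mul_of_nonneg_right hsm hB0
            _ = (d:ℝ)*(m*B) := by ring
        refine mul_le_mul_of_nonneg_left ?_ (by positivity)
        linarith
      have c3 : (d:ℝ)*lam*(lam*d + (d:ℝ)*(m*B)) = lam*(lam + m*B)*(d:ℝ)^2 := by ring
      have c4 : lam*(lam + m*B)*(d:ℝ)^2 ≤ lam*(lam + m*B)*((∑ j, ν j)*T) := by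
        apply mul_le_mul_of_nonneg_left hAM
        have : 0 ≤ lam + m*B := by linarith
        positivity
      have c5 : (d:ℝ)*lam*(∑ j, ν j) ≤ (lam*T*(lam + m*B))*(∑ j, ν j) := by
        have c6 : lam*(lam + m*B)*((∑ j, ν j)*T) = (lam*T*(lam + m*B))*(∑ j, ν j) := by ring
        calc (d:ℝ)*lam*(∑ j, ν j) ≤ (d:ℝ)*lam*(lam*d + (S.card:ℝ)*B) := c1
          _ ≤ (d:ℝ)*lam*(lam*d + (d:ℝ)*(m*B)) := c2
          _ = lam*(lam + m*B)*(d:ℝ)^2 := c3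
          _ ≤ lam*(lam + m*B)*((∑ j, ν j)*T) := c4
          _ = (lam*T*(lam + m*B))*(∑ j, ν j) := c6
      exact le_of_mul_le_mul_right c5 hP0
    have hCS : T^2 ≤ (d:ℝ)*Q := by
      have h := sq_sum_le_card_mul_sum_sq (s := (Finset.univ : Finset (Fin d)))
        (f := fun j => (ν j)⁻¹)
      rw [Finset.card_univ, Fintype.card_fin] at h
      exact_mod_cast h
    have hkey := key2 (d:ℝ) (S.card:ℝ) lam rho T Q hdsR hlam hrho0.le hdrho hCS hQle hQ0 hT0
    have hcpos : 0 < (d:ℝ) * rho + (S.card:ℝ) - d := by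
      have : 0 < (d:ℝ) * rho := by positivity
      linarith
    exact final _ hcpos hkey
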